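/- arXiv:quant-ph/0305005 — 10 statements merged into one kernel-verified Lean document; each statement's English description precedes it below -/
import Mathlib

section
/- Let C be a convex cone that is the convex hull of two subcones C₁ and C₂. If F is a face of C, then F ∩ C₁ is a face of C₁, F ∩ C₂ is a face of C₂, and F equals the convex hull of (F ∩ C₁) ∪ (F ∩ C₂). -/
open BigOperators

noncomputable section

variable {E : Type*} [AddCommGroup E] [Module ℝ E]

/-- `F` is a face of the convex set `C`: a convex subset of `C` such that whenever a point
of `F` is a nontrivial convex combination of two points of `C`, both points lie in `F`. -/
def IsFaceOf (F C : Set E) : Prop :=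
  F ⊆ C ∧ Convex ℝ F ∧
    ∀ x ∈ C, ∀ y ∈ C, ∀ t : ℝ, 0 < t → t < 1 →
      t • x + (1 - t) • y ∈ F → x ∈ F ∧ y ∈ F

/-- if `C` is the convex hull of two convex cones `C₁`, `C₂` and `F` is a face
of `C`, then `F ∩ C₁` is a face of `C₁`, `F ∩ C₂` is a face of `C₂`, and `F` is the convex
hull of `(F ∩ C₁) ∪ (F ∩ C₂)`. -/
theorem stmt_3 (C₁ C₂ F : Set E)
    (hC₁ : Convex ℝ C₁) (hC₁cone : ∀ r : ℝ, 0 < r → ∀ x ∈ C₁, r • x ∈ C₁)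
    (hC₂ : Convex ℝ C₂) (hC₂cone : ∀ r : ℝ, 0 < r → ∀ x ∈ C₂, r • x ∈ C₂)
    (hF : IsFaceOf F (convexHull ℝ (C₁ ∪ C₂))) :
    IsFaceOf (F ∩ C₁) C₁ ∧ IsFaceOf (F ∩ C₂) C₂ ∧
      F = convexHull ℝ ((F ∩ C₁) ∪ (F ∩ C₂)) := by
  obtain ⟨hFsub, hFconv, hFface⟩ := hF
  have hsub : C₁ ∪ C₂ ⊆ convexHull ℝ (C₁ ∪ C₂) := subset_convexHull ℝ _
  have h1 : IsFaceOf (F ∩ C₁) C₁ := by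
    refine ⟨Set.inter_subset_right, hFconv.inter hC₁, ?_⟩
    intro x hx y hy t ht0 ht1 hmem
    have h := hFface x (hsub (Or.inl hx)) y (hsub (Or.inl hy)) t ht0 ht1 hmem.1
    exact ⟨⟨h.1, hx⟩, ⟨h.2, hy⟩⟩
  have h2 : IsFaceOf (F ∩ C₂) C₂ := by
    refine ⟨Set.inter_subset_right, hFconv.inter hC₂, ?_⟩
    intro x hx y hy t ht0 ht1 hmem
    have h := hFface x (hsub (Or.inr hx)) y (hsub (Or.inr hy)) t ht0 ht1 hmem.1
    exact ⟨⟨h.1, hx⟩, ⟨h.2, hy⟩⟩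
  refine ⟨h1, h2, ?_⟩
  -- structure of the hull of a union of cones
  set S : Set E := (C₁ ∪ C₂) ∪ {w | ∃ u ∈ C₁, ∃ v ∈ C₂, w = u + v} with hSdef
  have key : ∀ p ∈ C₁, ∀ q ∈ C₂, p + q ∈ S := fun p hp q hq => Or.inr ⟨p, hp, q, hq, rfl⟩
  have hSconv : Convex ℝ S := by
    intro x hx y hy a b ha hb hab
    rcases eq_or_lt_of_le ha with ha0 | ha0
    · have hb1 : b = 1 := by linarith
      simpa [← ha0, hb1] using hy
    rcases eq_or_lt_of_le hb with hb0 | hb0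
    · have ha1 : a = 1 := by linarith
      simpa [← hb0, ha1] using hx
    rcases hx with (hx | hx) | ⟨u, hu, v, hv, rfl⟩ <;>
      rcases hy with (hy | hy) | ⟨u', hu', v', hv', rfl⟩
    · exact Or.inl (Or.inl (hC₁ hx hy ha hb hab))
    · exact key _ (hC₁cone a ha0 x hx) _ (hC₂cone b hb0 y hy)
    · have heq : a • x + b • (u' + v') = (a • x + b • u') + b • v' := by
        rw [smul_add]; abel
      rw [heq]
      exact key _ (hC₁ hx hu' ha hb hab) _ (hC₂cone b hb0 v' hv')
    · have heq : a • x + b • y = b • y + a • x := by abel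
      rw [heq]
      exact key _ (hC₁cone b hb0 y hy) _ (hC₂cone a ha0 x hx)
    · exact Or.inl (Or.inr (hC₂ hx hy ha hb hab))
    · have heq : a • x + b • (u' + v') = b • u' + (a • x + b • v') := by
        rw [smul_add]; abel
      rw [heq]
      exact key _ (hC₁cone b hb0 u' hu') _ (hC₂ hx hv' ha hb hab)
    · have heq : a • (u + v) + b • y = (a • u + b • y) + a • v := by
        rw [smul_add]; abel
      rw [heq]
      exact key _ (hC₁ hu hy ha hb hab) _ (hC₂cone a ha0 v hv)
    · have heq : a • (u + v) + b • y = a • u + (a • v + b • y) := by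
        rw [smul_add]; abel
      rw [heq]
      exact key _ (hC₁cone a ha0 u hu) _ (hC₂ hv hy ha hb hab)
    · have heq : a • (u + v) + b • (u' + v') = (a • u + b • u') + (a • v + b • v') := by
        rw [smul_add, smul_add]; abel
      rw [heq]
      exact key _ (hC₁ hu hu' ha hb hab) _ (hC₂ hv hv' ha hb hab)
  have hhullS : convexHull ℝ (C₁ ∪ C₂) ⊆ S := convexHull_min Set.subset_union_left hSconv
  apply Set.Subset.antisymm
  · intro z hz
    have hzS : z ∈ S := hhullS (hFsub hz)
    rcases hzS with (hz1 | hz2) | ⟨u, hu, v, hv, rfl⟩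
    · exact subset_convexHull ℝ _ (Or.inl ⟨hz, hz1⟩)
    · exact subset_convexHull ℝ _ (Or.inr ⟨hz, hz2⟩)
    · have hu2 : (2 : ℝ) • u ∈ C₁ := hC₁cone 2 (by norm_num) u hu
      have hv2 : (2 : ℝ) • v ∈ C₂ := hC₂cone 2 (by norm_num) v hv
      have heq : u + v = (1/2 : ℝ) • ((2:ℝ) • u) + (1 - 1/2 : ℝ) • ((2:ℝ) • v) := by
        rw [smul_smul, smul_smul]; norm_num
      have hface := hFface ((2:ℝ) • u) (hsub (Or.inl hu2)) ((2:ℝ) • v) (hsub (Or.inr hv2))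
        (1/2) (by norm_num) (by norm_num) (by rw [← heq]; exact hz)
      have hm1 : (2:ℝ) • u ∈ convexHull ℝ ((F ∩ C₁) ∪ (F ∩ C₂)) :=
        subset_convexHull ℝ _ (Or.inl ⟨hface.1, hu2⟩)
      have hm2 : (2:ℝ) • v ∈ convexHull ℝ ((F ∩ C₁) ∪ (F ∩ C₂)) :=
        subset_convexHull ℝ _ (Or.inr ⟨hface.2, hv2⟩)
      rw [heq]
      exact (convex_convexHull ℝ _) hm1 hm2 (by norm_num) (by norm_num) (by norm_num)
  · refine convexHull_min ?_ hFconv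
    exact Set.union_subset Set.inter_subset_left Set.inter_subset_left
end
end

section
/- Let D ⊆ ℒ(M_m, M_n) be the cone of decomposable maps and V₁ the cone of (unnormalized) separable block matrices in M_n ⊗ M_m. Suppose φ is a boundary point of D that is an interior point of the cone P₁ of positive maps, and let A be a nonzero positive semidefinite block matrix with positive partial transpose satisfying ⟨A, φ⟩ = 0. Then A ∉ V₁, i.e., A is entangled. -/
open Matrix BigOperators
open scoped ComplexOrder

noncomputable section

/-- vectorization `z̃` of an `m×n` matrix, as an element of `ℂ^n ⊗ ℂ^m`. -/
def vecz {m n : ℕ} (z : Matrix (Fin m) (Fin n) ℂ) : Fin n × Fin m → ℂ :=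
  fun p => z p.2 p.1

/-- the rank-one block matrix `z̃ z̃* ∈ M_n ⊗ M_m`. -/
def vv {m n : ℕ} (z : Matrix (Fin m) (Fin n) ℂ) :
    Matrix (Fin n × Fin m) (Fin n × Fin m) ℂ :=
  fun p q => vecz z p * star (vecz z q)

/-- partial (block) transpose on `M_n ⊗ M_m`. -/
def ptrans {m n : ℕ} (A : Matrix (Fin n × Fin m) (Fin n × Fin m) ℂ) :
    Matrix (Fin n × Fin m) (Fin n × Fin m) ℂ :=
  fun p q => A (p.1, q.2) (q.1, p.2)

/-- the bilinear pairing `⟨A, φ⟩ = Σ_{i,j} Tr(φ(e_{ij}) a_{ij}ᵗ)`. -/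
def pair {m n : ℕ} (A : Matrix (Fin n × Fin m) (Fin n × Fin m) ℂ)
    (φ : Matrix (Fin m) (Fin m) ℂ → Matrix (Fin n) (Fin n) ℂ) : ℂ :=
  ∑ i : Fin m, ∑ j : Fin m, ∑ k : Fin n, ∑ l : Fin n,
    φ (Matrix.single i j 1) k l * A (k, i) (l, j)

/-- `φ_V : X ↦ V* X V`. -/
def phiV {m n : ℕ} (V : Matrix (Fin m) (Fin n) ℂ) :
    Matrix (Fin m) (Fin m) ℂ → Matrix (Fin n) (Fin n) ℂ :=
  fun X => Vᴴ * X * V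

/-- `φ^W : X ↦ W* Xᵗ W`. -/
def phiW {m n : ℕ} (W : Matrix (Fin m) (Fin n) ℂ) :
    Matrix (Fin m) (Fin m) ℂ → Matrix (Fin n) (Fin n) ℂ :=
  fun X => Wᴴ * Xᵀ * W

/-- the cone `P₁` of positive linear maps `M_m → M_n`. -/
def P1 (m n : ℕ) : Set (Matrix (Fin m) (Fin m) ℂ → Matrix (Fin n) (Fin n) ℂ) :=
  {φ | IsLinearMap ℂ φ ∧ ∀ X, X.PosSemidef → (φ X).PosSemidef}

/-- the cone `D` of decomposable maps: sums of a completely positive map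
`X ↦ Σ Vᵢ* X Vᵢ` and a completely copositive map `X ↦ Σ Wⱼ* Xᵗ Wⱼ`. -/
def Decomp (m n : ℕ) : Set (Matrix (Fin m) (Fin m) ℂ → Matrix (Fin n) (Fin n) ℂ) :=
  {φ | ∃ (N₁ N₂ : ℕ) (V : Fin N₁ → Matrix (Fin m) (Fin n) ℂ)
        (W : Fin N₂ → Matrix (Fin m) (Fin n) ℂ), ∀ X,
        φ X = (∑ i, (V i)ᴴ * X * V i) + ∑ j, (W j)ᴴ * Xᵀ * W j}

/-- interior point of a convex set, in the algebraic sense used in the paper. -/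
def IsInteriorPt {α : Type*} [AddCommGroup α] [Module ℝ α] (C : Set α) (x : α) : Prop :=
  x ∈ C ∧ ∀ y ∈ C, ∃ t : ℝ, 1 < t ∧ (1 - t) • y + t • x ∈ C

/-- membership in the cone `V₁` of (unnormalized) separable block matrices. -/
def InV1 {m n : ℕ} (A : Matrix (Fin n × Fin m) (Fin n × Fin m) ℂ) : Prop :=
  ∃ (N : ℕ) (z : Fin N → Matrix (Fin m) (Fin n) ℂ),
    (∀ k, Matrix.rank (z k) ≤ 1) ∧ A = ∑ k, vv (z k)


section AuxiliaryLemmas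

lemma sum4_swap {a b c d : Type*} [Fintype a] [Fintype b] [Fintype c] [Fintype d]
    (f : a → b → c → d → ℂ) :
    ∑ i, ∑ j, ∑ k, ∑ l, f i j k l = ∑ k, ∑ l, ∑ i, ∑ j, f i j k l :=
  calc ∑ i, ∑ j, ∑ k, ∑ l, f i j k l
      = ∑ i, ∑ k, ∑ j, ∑ l, f i j k l :=
        Finset.sum_congr rfl fun _ _ => Finset.sum_comm
    _ = ∑ k, ∑ i, ∑ j, ∑ l, f i j k l := Finset.sum_comm
    _ = ∑ k, ∑ i, ∑ l, ∑ j, f i j k l :=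
        Finset.sum_congr rfl fun _ _ => Finset.sum_congr rfl fun _ _ => Finset.sum_comm
    _ = ∑ k, ∑ l, ∑ i, ∑ j, f i j k l :=
        Finset.sum_congr rfl fun _ _ => Finset.sum_comm

lemma rank_le_one_outer {m n : ℕ} (z : Matrix (Fin m) (Fin n) ℂ) (hz : z.rank ≤ 1) :
    ∃ (u : Fin m → ℂ) (v : Fin n → ℂ), ∀ i k, z i k = u i * v k := by
  rw [Matrix.rank] at hz
  obtain ⟨v₀, hv₀⟩ := finrank_le_one_iff.mp hz
  have hc : ∀ k : Fin n, ∃ c : ℂ, ∀ i, c * (v₀ : Fin m → ℂ) i = z i k := by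
    intro k
    have hmem : (fun i => z i k) ∈ LinearMap.range z.mulVecLin := by
      refine ⟨Pi.single k 1, ?_⟩
      ext i
      simp [Matrix.mulVecLin_apply, Matrix.mulVec, dotProduct, Pi.single_apply, mul_ite]
    obtain ⟨c, hc⟩ := hv₀ ⟨_, hmem⟩
    refine ⟨c, fun i => ?_⟩
    have := congrFun (congrArg Subtype.val hc) i
    simpa using this
  choose c hc using hc
  exact ⟨(v₀ : Fin m → ℂ), c, fun i k => by rw [← hc k i]; ring⟩

lemma psd_outer {n : ℕ} (u : Fin n → ℂ) :
    Matrix.PosSemidef (Matrix.of fun i j => u i * star (u j)) := by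
  rw [Matrix.posSemidef_iff_dotProduct_mulVec]
  constructor
  · ext i j
    simp [Matrix.conjTranspose_apply, StarMul.star_mul, mul_comm]
  · intro x
    have key : star x ⬝ᵥ ((Matrix.of fun i j => u i * star (u j)) *ᵥ x)
        = (∑ i, star (x i) * u i) * star (∑ j, star (x j) * u j) := by
      rw [star_sum, Finset.sum_mul_sum]
      simp only [dotProduct, Matrix.mulVec, Matrix.of_apply, Finset.mul_sum,
        StarMul.star_mul, star_star, Pi.star_apply]
      refine Finset.sum_congr rfl fun i _ => Finset.sum_congr rfl fun j _ => ?_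
      ring
    rw [key]
    exact mul_star_self_nonneg _

lemma pair_vv_nonneg {m n : ℕ} (ψ : Matrix (Fin m) (Fin m) ℂ → Matrix (Fin n) (Fin n) ℂ)
    (hψ : ψ ∈ P1 m n) (u : Fin m → ℂ) (v : Fin n → ℂ)
    (z : Matrix (Fin m) (Fin n) ℂ) (huv : ∀ i k, z i k = u i * v k) :
    0 ≤ pair (vv z) ψ := by
  set M : Matrix (Fin m) (Fin m) ℂ := Matrix.of fun i j => u i * star (u j) with hM
  have hψM : (ψ M).PosSemidef := hψ.2 M (psd_outer u)
  set L : Matrix (Fin m) (Fin m) ℂ →ₗ[ℂ] Matrix (Fin n) (Fin n) ℂ := IsLinearMap.mk' ψ hψ.1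
  have hMsum : M = ∑ i, ∑ j, (M i j) • Matrix.single i j (1:ℂ) := by
    conv_lhs => rw [Matrix.matrix_eq_sum_single M]
    simp
  have hψM_eq : ∀ k l, (ψ M) k l
      = ∑ i, ∑ j, ψ (Matrix.single i j 1) k l * (M i j) := by
    intro k l
    have h1 : ψ M = ∑ i, ∑ j, (M i j) • ψ (Matrix.single i j 1) := by
      conv_lhs => rw [hMsum]
      show L _ = _
      rw [map_sum]
      refine Finset.sum_congr rfl fun i _ => ?_
      rw [map_sum]
      exact Finset.sum_congr rfl fun j _ => L.map_smul _ _
    rw [h1]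
    simp [Matrix.sum_apply, mul_comm]
  have final : pair (vv z) ψ = star (star v) ⬝ᵥ ((ψ M) *ᵥ (star v)) := by
    calc pair (vv z) ψ = ∑ i, ∑ j, ∑ k, ∑ l,
          ψ (Matrix.single i j 1) k l * (M i j * (v k * star (v l))) := by
          unfold pair
          refine Finset.sum_congr rfl fun i _ => Finset.sum_congr rfl fun j _ =>
            Finset.sum_congr rfl fun k _ => Finset.sum_congr rfl fun l _ => ?_
          simp only [vv, vecz, huv, hM, Matrix.of_apply, StarMul.star_mul]
          ring
      _ = ∑ k, ∑ l, ∑ i, ∑ j,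
          ψ (Matrix.single i j 1) k l * (M i j * (v k * star (v l))) := sum4_swap _
      _ = ∑ k, ∑ l, (ψ M k l) * (v k * star (v l)) := by
          refine Finset.sum_congr rfl fun k _ => Finset.sum_congr rfl fun l _ => ?_
          rw [hψM_eq k l, Finset.sum_mul]
          refine Finset.sum_congr rfl fun i _ => ?_
          rw [Finset.sum_mul]
          refine Finset.sum_congr rfl fun j _ => ?_
          ring
      _ = star (star v) ⬝ᵥ ((ψ M) *ᵥ (star v)) := by
          simp only [dotProduct, Matrix.mulVec, Finset.mul_sum, star_star, Pi.star_apply]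
          refine Finset.sum_congr rfl fun k _ => Finset.sum_congr rfl fun l _ => ?_
          ring
  rw [final]
  exact hψM.dotProduct_mulVec_nonneg _

lemma pair_sum {m n N : ℕ} (B : Fin N → Matrix (Fin n × Fin m) (Fin n × Fin m) ℂ)
    (ψ : Matrix (Fin m) (Fin m) ℂ → Matrix (Fin n) (Fin n) ℂ) :
    pair (∑ t, B t) ψ = ∑ t, pair (B t) ψ := by
  unfold pair
  simp only [Matrix.sum_apply, Finset.mul_sum]
  calc ∑ i : Fin m, ∑ j : Fin m, ∑ k : Fin n, ∑ l : Fin n, ∑ t : Fin N,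
        ψ (Matrix.single i j 1) k l * B t (k, i) (l, j)
      = ∑ i : Fin m, ∑ j : Fin m, ∑ k : Fin n, ∑ t : Fin N, ∑ l : Fin n, _ :=
        Finset.sum_congr rfl fun i _ => Finset.sum_congr rfl fun j _ =>
          Finset.sum_congr rfl fun k _ => Finset.sum_comm
    _ = ∑ i : Fin m, ∑ j : Fin m, ∑ t : Fin N, ∑ k : Fin n, ∑ l : Fin n, _ :=
        Finset.sum_congr rfl fun i _ => Finset.sum_congr rfl fun j _ => Finset.sum_comm
    _ = ∑ i : Fin m, ∑ t : Fin N, ∑ j : Fin m, ∑ k : Fin n, ∑ l : Fin n, _ :=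
        Finset.sum_congr rfl fun i _ => Finset.sum_comm
    _ = ∑ t : Fin N, ∑ i : Fin m, ∑ j : Fin m, ∑ k : Fin n, ∑ l : Fin n,
        ψ (Matrix.single i j 1) k l * B t (k, i) (l, j) := Finset.sum_comm

lemma pair_add_psi {m n : ℕ} (A : Matrix (Fin n × Fin m) (Fin n × Fin m) ℂ)
    (ψ₁ ψ₂ : Matrix (Fin m) (Fin m) ℂ → Matrix (Fin n) (Fin n) ℂ) :
    pair A (ψ₁ + ψ₂) = pair A ψ₁ + pair A ψ₂ := by
  unfold pair
  simp [Pi.add_apply, Matrix.add_apply, add_mul, Finset.sum_add_distrib]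

lemma pair_smul_psi {m n : ℕ} (A : Matrix (Fin n × Fin m) (Fin n × Fin m) ℂ) (r : ℝ)
    (ψ : Matrix (Fin m) (Fin m) ℂ → Matrix (Fin n) (Fin n) ℂ) :
    pair A (r • ψ) = (r : ℂ) * pair A ψ := by
  unfold pair
  simp [Pi.smul_apply, Matrix.smul_apply, Complex.real_smul, Finset.mul_sum, mul_assoc]

/-- the trace map `X ↦ (Tr X) • I`. -/
def trmap (m n : ℕ) : Matrix (Fin m) (Fin m) ℂ → Matrix (Fin n) (Fin n) ℂ :=
  fun X => (Matrix.trace X) • (1 : Matrix (Fin n) (Fin n) ℂ)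

lemma trmap_mem_P1 (m n : ℕ) : trmap m n ∈ P1 m n := by
  constructor
  · constructor
    · intro X Y; simp [trmap, Matrix.trace_add, add_smul]
    · intro c X; simp [trmap, Matrix.trace_smul, smul_smul]
  · intro X hX
    have htr : (0:ℂ) ≤ Matrix.trace X := by
      have h : ∀ i, (0:ℂ) ≤ X i i := by
        intro i
        have := hX.dotProduct_mulVec_nonneg (Pi.single i 1)
        simpa [dotProduct, Matrix.mulVec, Pi.single_apply, mul_ite] using this
      exact Finset.sum_nonneg fun i _ => h i
    rw [Matrix.posSemidef_iff_dotProduct_mulVec]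
    constructor
    · ext i j
      have hs : star X.trace = X.trace := by
        rw [Complex.star_def, Complex.conj_eq_iff_im]
        simpa using (Complex.le_def.mp htr).2.symm
      simp only [trmap, Matrix.conjTranspose_apply, Matrix.smul_apply, Matrix.one_apply,
        smul_eq_mul, StarMul.star_mul, apply_ite (star : ℂ → ℂ), star_one, star_zero, hs]
      by_cases h : i = j <;> simp [h, eq_comm]
    · intro x
      have heq : star x ⬝ᵥ ((trmap m n X) *ᵥ x) = Matrix.trace X * (star x ⬝ᵥ x) := by
        simp [trmap, dotProduct, Matrix.mulVec, Matrix.one_apply, mul_ite, Finset.mul_sum,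
          mul_comm, mul_left_comm, mul_assoc]
      rw [heq]
      exact mul_nonneg htr (dotProduct_star_self_nonneg x)

lemma pair_trmap {m n : ℕ} (A : Matrix (Fin n × Fin m) (Fin n × Fin m) ℂ) :
    pair A (trmap m n) = Matrix.trace A := by
  unfold pair trmap
  have h1 : ∀ (i j : Fin m) (kk l : Fin n),
      (Matrix.trace (Matrix.single i j (1:ℂ)) • (1 : Matrix (Fin n) (Fin n) ℂ)) kk l
      = (if i = j then 1 else 0) * (if kk = l then 1 else 0) := by
    intro i j kk l
    by_cases h : i = j
    · subst h
      simp [Matrix.trace_single_eq_same, Matrix.one_apply]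
    · rw [Matrix.trace_single_eq_of_ne i j 1 h]
      simp [h]
  simp only [h1, ite_mul, mul_ite, one_mul, zero_mul, mul_one, mul_zero,
    Finset.sum_ite_eq, Finset.mem_univ, if_true, Finset.sum_ite_irrel, Finset.sum_const_zero]
  rw [Matrix.trace]
  simp only [Matrix.diag, Fintype.sum_prod_type]
  exact Finset.sum_comm

lemma psd_trace_zero {k : Type*} [Fintype k] [DecidableEq k] (A : Matrix k k ℂ)
    (hA : A.PosSemidef) (h : A.trace = 0) : A = 0 := by
  exact hA.trace_eq_zero_iff.mp h

end AuxiliaryLemmas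

/-- if `φ` is a boundary point of the cone `D` of decomposable maps which is an
interior point of the cone `P₁` of positive maps, and `A ≠ 0` is PSD with PSD partial
transpose and `⟨A, φ⟩ = 0`, then `A` is entangled, i.e. `A ∉ V₁`. -/
theorem stmt_4 (m n : ℕ)
    (φ : Matrix (Fin m) (Fin m) ℂ → Matrix (Fin n) (Fin n) ℂ)
    (hφD : φ ∈ Decomp m n) (hφbd : ¬ IsInteriorPt (Decomp m n) φ)
    (hφint : IsInteriorPt (P1 m n) φ)
    (A : Matrix (Fin n × Fin m) (Fin n × Fin m) ℂ)
    (hA : A.PosSemidef) (hAt : (ptrans A).PosSemidef) (hA0 : A ≠ 0)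
    (hpair : pair A φ = 0) :
    ¬ InV1 A := by
  rintro ⟨N, z, hzr, hAeq⟩
  -- A pairs nonnegatively with every positive map
  have hnn : ∀ ψ ∈ P1 m n, 0 ≤ pair A ψ := by
    intro ψ hψ
    rw [hAeq, pair_sum]
    refine Finset.sum_nonneg fun t _ => ?_
    obtain ⟨u, v, huv⟩ := rank_le_one_outer (z t) (hzr t)
    exact pair_vv_nonneg ψ hψ u v (z t) huv
  -- use interiority of φ in P₁ with the trace map
  obtain ⟨t, ht1, htmem⟩ := hφint.2 (trmap m n) (trmap_mem_P1 m n)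
  have h1 := hnn _ htmem
  rw [pair_add_psi, pair_smul_psi, pair_smul_psi, hpair, mul_zero, add_zero] at h1
  have h0 := hnn _ (trmap_mem_P1 m n)
  set r : ℂ := pair A (trmap m n) with hr
  have hre : 0 ≤ r.re := by simpa using (Complex.le_def.mp h0).1
  have him : r.im = 0 := by simpa using (Complex.le_def.mp h0).2.symm
  have h1re : 0 ≤ ((1 - t : ℝ) : ℂ) * r → 0 ≤ (1 - t) * r.re := by
    intro hh
    have := (Complex.le_def.mp hh).1
    simpa [Complex.re_ofReal_mul] using this
  have hneg : (1 - t) * r.re ≤ 0 :=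
    mul_nonpos_of_nonpos_of_nonneg (by linarith) hre
  have hrre : r.re = 0 := by
    have hge := h1re h1
    rcases lt_or_eq_of_le hre with hlt | heq
    · exfalso
      have : (1 - t) * r.re < 0 := mul_neg_of_neg_of_pos (by linarith) hlt
      linarith
    · exact heq.symm
  have hr0 : r = 0 := Complex.ext hrre him
  rw [hr, pair_trmap] at hr0
  exact hA0 (psd_trace_zero A hA hr0)
end
end

section
/- For 1 < a < 3, b > 0, c > 0 with 4bc = (3−a)², the map Φ[a,b,c] : M₃ → M₃ decomposes as Φ[a,b,c] = ((a−1)/2) Φ[3,0,0] + ((3−a)/2) Φ[1, √(b/c), √(c/b)]. -/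
open Matrix BigOperators
open scoped ComplexOrder

noncomputable section

/-- the map `Φ[a,b,c] : M₃ → M₃` of Cho–Kye–Lee. -/
def Phi (a b c : ℝ) : Matrix (Fin 3) (Fin 3) ℂ → Matrix (Fin 3) (Fin 3) ℂ :=
  fun x => Matrix.diagonal
    ![(a : ℂ) * x 0 0 + (b : ℂ) * x 1 1 + (c : ℂ) * x 2 2,
      (a : ℂ) * x 1 1 + (b : ℂ) * x 2 2 + (c : ℂ) * x 0 0,
      (a : ℂ) * x 2 2 + (b : ℂ) * x 0 0 + (c : ℂ) * x 1 1] - x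

/-- `y₁ = λe₁₂+μe₂₁`, `y₂ = λe₂₃+μe₃₂`, `y₃ = μe₁₃+λe₃₁`. -/
def yMat (lam mu : ℝ) : Fin 3 → Matrix (Fin 3) (Fin 3) ℂ :=
  ![!![0, (lam : ℂ), 0; (mu : ℂ), 0, 0; 0, 0, 0],
    !![0, 0, 0; 0, 0, (lam : ℂ); 0, (mu : ℂ), 0],
    !![0, 0, (mu : ℂ); 0, 0, 0; (lam : ℂ), 0, 0]]

/-- the PPT entangled state `A = x̃x̃* + Σᵢ ỹᵢỹᵢ*` with `x = I₃`. -/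
def Amat (lam mu : ℝ) : Matrix (Fin 3 × Fin 3) (Fin 3 × Fin 3) ℂ :=
  vv (1 : Matrix (Fin 3) (Fin 3) ℂ) + ∑ i : Fin 3, vv (yMat lam mu i)
/-- for `1 < a < 3`, `b, c > 0` with `4bc = (3-a)²`,
`Φ[a,b,c] = ((a-1)/2) Φ[3,0,0] + ((3-a)/2) Φ[1, √(b/c), √(c/b)]`. -/
theorem stmt_5 (a b c : ℝ) (ha1 : 1 < a) (ha3 : a < 3) (hb : 0 < b) (hc : 0 < c)
    (h : 4 * b * c = (3 - a) ^ 2) :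
    ∀ X : Matrix (Fin 3) (Fin 3) ℂ,
      Phi a b c X = (((a - 1) / 2 : ℝ) : ℂ) • Phi 3 0 0 X +
        (((3 - a) / 2 : ℝ) : ℂ) • Phi 1 (Real.sqrt (b / c)) (Real.sqrt (c / b)) X := by
  have h3a : 0 < 3 - a := by linarith
  have hbc : Real.sqrt (b / c) = 2 * b / (3 - a) := by
    rw [show b / c = (2 * b / (3 - a)) ^ 2 by
      field_simp
      nlinarith [sq_nonneg (3 - a)]]
    exact Real.sqrt_sq (by positivity)
  have hcb : Real.sqrt (c / b) = 2 * c / (3 - a) := by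
    rw [show c / b = (2 * c / (3 - a)) ^ 2 by
      field_simp
      nlinarith [sq_nonneg (3 - a)]]
    exact Real.sqrt_sq (by positivity)
  have key1 : (3 - a) / 2 * Real.sqrt (b / c) = b := by
    rw [hbc]; field_simp
  have key2 : (3 - a) / 2 * Real.sqrt (c / b) = c := by
    rw [hcb]; field_simp
  intro X
  ext i j
  have k1 : ((((3 - a) / 2 : ℝ) : ℂ)) * ((Real.sqrt (b / c) : ℝ) : ℂ) = (b : ℂ) := by
    rw [← Complex.ofReal_mul, key1]
  have k2 : ((((3 - a) / 2 : ℝ) : ℂ)) * ((Real.sqrt (c / b) : ℝ) : ℂ) = (c : ℂ) := by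
    rw [← Complex.ofReal_mul, key2]
  fin_cases i <;> fin_cases j <;>
    simp [Phi, Matrix.diagonal, Fin.ext_iff] <;> push_cast [] at k1 k2 ⊢ <;>
    first
      | ring1
      | (rw [← k1, ← k2]; ring1)
end
end

section
/- The map Φ[3,0,0] : M₃ → M₃, x ↦ 3·diag(x₁₁, x₂₂, x₃₃) − x, equals φ_{V₁} + φ_{V₂} + φ_{V₃}, where φ_V(X) = V* X V and V₁ = e₁₁ − e₂₂, V₂ = e₂₂ − e₃₃, V₃ = −e₁₁ + e₃₃ (e_{ij} being matrix units). In particular Φ[3,0,0] is completely positive. -/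
open Matrix BigOperators
open scoped ComplexOrder

noncomputable section

/-- Complete positivity, via the Kraus representation `X ↦ Σᵢ Vᵢ* X Vᵢ`. -/
def CompletelyPositive {m n : ℕ}
    (φ : Matrix (Fin m) (Fin m) ℂ → Matrix (Fin n) (Fin n) ℂ) : Prop :=
  ∃ (N : ℕ) (V : Fin N → Matrix (Fin m) (Fin n) ℂ),
    ∀ X, φ X = ∑ i, (V i)ᴴ * X * V i

/-- `Φ[3,0,0] = φ_{V₁} + φ_{V₂} + φ_{V₃}` with `V₁ = e₁₁ - e₂₂`,
`V₂ = e₂₂ - e₃₃`, `V₃ = -e₁₁ + e₃₃`; in particular `Φ[3,0,0]` is completely positive. -/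
theorem stmt_6 :
    (∀ X : Matrix (Fin 3) (Fin 3) ℂ,
      Phi 3 0 0 X =
        phiV (!![1, 0, 0; 0, -1, 0; 0, 0, 0] : Matrix (Fin 3) (Fin 3) ℂ) X +
        phiV (!![0, 0, 0; 0, 1, 0; 0, 0, -1] : Matrix (Fin 3) (Fin 3) ℂ) X +
        phiV (!![-1, 0, 0; 0, 0, 0; 0, 0, 1] : Matrix (Fin 3) (Fin 3) ℂ) X) ∧
    CompletelyPositive (Phi 3 0 0) := by
  have h : ∀ X : Matrix (Fin 3) (Fin 3) ℂ,
      Phi 3 0 0 X =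
        phiV (!![1, 0, 0; 0, -1, 0; 0, 0, 0] : Matrix (Fin 3) (Fin 3) ℂ) X +
        phiV (!![0, 0, 0; 0, 1, 0; 0, 0, -1] : Matrix (Fin 3) (Fin 3) ℂ) X +
        phiV (!![-1, 0, 0; 0, 0, 0; 0, 0, 1] : Matrix (Fin 3) (Fin 3) ℂ) X := by
    intro X
    funext i j
    simp only [Phi, phiV, Matrix.sub_apply, Matrix.add_apply, Matrix.mul_apply,
      Matrix.conjTranspose_apply, Matrix.diagonal_apply, Fin.sum_univ_three]
    fin_cases i <;> fin_cases j <;>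
      simp [Matrix.cons_val_zero, Matrix.cons_val_one, Matrix.head_cons, Matrix.vecHead, Matrix.vecTail] <;> ring
  refine ⟨h, 3, ![!![1, 0, 0; 0, -1, 0; 0, 0, 0], !![0, 0, 0; 0, 1, 0; 0, 0, -1],
      !![-1, 0, 0; 0, 0, 0; 0, 0, 1]], fun X => ?_⟩
  rw [h X, Fin.sum_univ_three]
  rfl
end
end

section
/- Let λ, μ > 0 with λμ = 1 and λ ≠ 1, and let x = I₃, y₁ = λe₁₂ + μe₂₁, y₂ = λe₂₃ + μe₃₂, y₃ = μe₁₃ + λe₃₁ ∈ M₃. Then A := x̃x̃* + Σ_{i=1}^3 ỹᵢỹᵢ* ∈ M₃ ⊗ M₃ is positive semidefinite and its partial transpose A^τ is positive semidefinite. -/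
open Matrix BigOperators
open scoped ComplexOrder

noncomputable section

lemma vv_posSemidef {m n : ℕ} (z : Matrix (Fin m) (Fin n) ℂ) : (vv z).PosSemidef := by
  have h : vv z = (Matrix.replicateCol Unit (vecz z)) * (Matrix.replicateCol Unit (vecz z))ᴴ := by
    ext p q
    simp [vv, Matrix.mul_apply, Matrix.replicateCol, Matrix.conjTranspose_apply]
  rw [h]
  exact Matrix.posSemidef_self_mul_conjTranspose _

set_option maxHeartbeats 2000000 in
lemma ptrans_Amat (lam mu : ℝ) (hlm : lam * mu = 1) :
    ptrans (Amat lam mu) = Amat lam mu := by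
  have hc : (lam : ℂ) * (mu : ℂ) = 1 := by
    rw [← Complex.ofReal_mul, hlm, Complex.ofReal_one]
  ext ⟨p1, p2⟩ ⟨q1, q2⟩
  simp only [ptrans, Amat, Matrix.add_apply, Finset.sum_apply, Fin.sum_univ_three,
    vv, vecz, yMat, Matrix.one_apply]
  fin_cases p1 <;> fin_cases p2 <;> fin_cases q1 <;> fin_cases q2 <;>
    simp [-mul_eq_zero, Matrix.vecHead, Matrix.vecTail] <;>
    first
      | rfl
      | linear_combination hc
      | linear_combination -hc

lemma Amat_posSemidef (lam mu : ℝ) : (Amat lam mu).PosSemidef := by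
  unfold Amat
  rw [Fin.sum_univ_three]
  exact (vv_posSemidef _).add (((vv_posSemidef _).add (vv_posSemidef _)).add (vv_posSemidef _))

/-- for `λ, μ > 0` with `λμ = 1`, `λ ≠ 1`, the matrix
`A = x̃x̃* + Σᵢ ỹᵢỹᵢ*` is positive semidefinite with positive semidefinite
partial transpose. -/
theorem stmt_8 (lam mu : ℝ) (hl : 0 < lam) (hm : 0 < mu) (hlm : lam * mu = 1)
    (hne : lam ≠ 1) :
    (Amat lam mu).PosSemidef ∧ (ptrans (Amat lam mu)).PosSemidef := by
  constructor
  · exact Amat_posSemidef lam mu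
  · rw [ptrans_Amat lam mu hlm]
    exact Amat_posSemidef lam mu
end
end

section
/- Let λ, μ > 0 with λμ = 1 and λ ≠ 1, and let A = x̃x̃* + Σ_{i=1}^3 ỹᵢỹᵢ* with x = I₃, y₁ = λe₁₂ + μe₂₁, y₂ = λe₂₃ + μe₃₂, y₃ = μe₁₃ + λe₃₁ ∈ M₃. Then A, viewed as a 9×9 matrix, has rank 4. -/
open Matrix BigOperators
open scoped ComplexOrder

noncomputable section

def Bmat (lam mu : ℝ) : Matrix (Fin 3 × Fin 3) (Fin 4) ℂ :=
  fun p j => ![vecz (1 : Matrix (Fin 3) (Fin 3) ℂ), vecz (yMat lam mu 0),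
    vecz (yMat lam mu 1), vecz (yMat lam mu 2)] j p

lemma Amat_eq (lam mu : ℝ) : Amat lam mu = Bmat lam mu * (Bmat lam mu)ᴴ := by
  ext p q
  simp [Amat, Bmat, vv, Matrix.mul_apply, Matrix.conjTranspose_apply,
    Fin.sum_univ_succ, Matrix.add_apply, Matrix.sum_apply]

lemma BtB (lam mu : ℝ) : (Bmat lam mu)ᴴ * Bmat lam mu =
    Matrix.diagonal ![3, (lam : ℂ)^2 + (mu : ℂ)^2, (lam : ℂ)^2 + (mu : ℂ)^2,
      (lam : ℂ)^2 + (mu : ℂ)^2] := by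
  ext i j
  fin_cases i <;> fin_cases j <;>
    simp [Bmat, vecz, yMat, Matrix.mul_apply, Matrix.conjTranspose_apply,
      Fintype.sum_prod_type, Fin.sum_univ_succ, Matrix.one_apply, Matrix.diagonal] <;> ring

/-- the matrix `A`, viewed as a `9×9` matrix, has rank `4`. -/
theorem stmt_10 (lam mu : ℝ) (hl : 0 < lam) (hm : 0 < mu) (hlm : lam * mu = 1)
    (hne : lam ≠ 1) :
    (Amat lam mu).rank = 4 := by
  have h2 : (lam : ℂ)^2 + (mu : ℂ)^2 ≠ 0 := by
    have h0 : (lam^2 + mu^2 : ℝ) ≠ 0 := by positivity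
    have : ((lam^2 + mu^2 : ℝ) : ℂ) ≠ 0 := Complex.ofReal_ne_zero.mpr h0
    push_cast at this
    exact this
  rw [Amat_eq, Matrix.rank_self_mul_conjTranspose, ← Matrix.rank_conjTranspose_mul_self,
    BtB, Matrix.rank_diagonal]
  have hall : ∀ i ∈ Finset.univ, ![3, (lam : ℂ)^2 + (mu : ℂ)^2, (lam : ℂ)^2 + (mu : ℂ)^2,
      (lam : ℂ)^2 + (mu : ℂ)^2] i ≠ 0 := by
    intro i _
    fin_cases i <;> simp [h2]
  rw [Fintype.card_subtype, Finset.filter_true_of_mem hall]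
  rfl
end
end

section
/- Let λ, μ > 0 with λμ = 1 and λ ≠ 1, and A = x̃x̃* + Σ_{i=1}^3 ỹᵢỹᵢ* as above (x = I₃, y₁ = λe₁₂+μe₂₁, y₂ = λe₂₃+μe₃₂, y₃ = μe₁₃+λe₃₁). Then A generates an extreme ray of the cone 𝕋 of 9×9 positive semidefinite matrices with positive semidefinite partial transpose: if B ∈ 𝕋 and A − B ∈ 𝕋, then B is a nonnegative scalar multiple of A. -/
set_option maxHeartbeats 4000000

open Matrix BigOperators
open scoped ComplexOrder

noncomputable section

/- ### auxiliary definitions for the proof -/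

/-- kernel vector `e₀₀ - e₁₁`. -/
def kv1 : Fin 3 × Fin 3 → ℂ := fun q => !![(1:ℂ),0,0;0,-1,0;0,0,0] q.1 q.2
/-- kernel vector `e₀₀ - e₂₂`. -/
def kv2 : Fin 3 × Fin 3 → ℂ := fun q => !![(1:ℂ),0,0;0,0,0;0,0,-1] q.1 q.2
/-- kernel vector `μ e₁₀ - λ e₀₁`. -/
def kv3 (lam mu : ℝ) : Fin 3 × Fin 3 → ℂ := fun q => !![(0:ℂ),-(lam:ℂ),0;(mu:ℂ),0,0;0,0,0] q.1 q.2
/-- kernel vector `μ e₂₁ - λ e₁₂`. -/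
def kv4 (lam mu : ℝ) : Fin 3 × Fin 3 → ℂ := fun q => !![(0:ℂ),0,0;0,0,-(lam:ℂ);0,(mu:ℂ),0] q.1 q.2
/-- kernel vector `λ e₂₀ - μ e₀₂`. -/
def kv5 (lam mu : ℝ) : Fin 3 × Fin 3 → ℂ := fun q => !![(0:ℂ),0,-(mu:ℂ);0,0,0;(lam:ℂ),0,0] q.1 q.2
/-- kernel vector `λ e₀₁ - μ e₁₀` of the partial transpose. -/
def ku3 (lam mu : ℝ) : Fin 3 × Fin 3 → ℂ := fun q => !![(0:ℂ),(lam:ℂ),0;-(mu:ℂ),0,0;0,0,0] q.1 q.2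
/-- kernel vector `λ e₁₂ - μ e₂₁` of the partial transpose. -/
def ku4 (lam mu : ℝ) : Fin 3 × Fin 3 → ℂ := fun q => !![(0:ℂ),0,0;0,0,(lam:ℂ);0,-(mu:ℂ),0] q.1 q.2
/-- kernel vector `μ e₀₂ - λ e₂₀` of the partial transpose. -/
def ku5 (lam mu : ℝ) : Fin 3 × Fin 3 → ℂ := fun q => !![(0:ℂ),0,(mu:ℂ);0,0,0;-(lam:ℂ),0,0] q.1 q.2

lemma Aker (lam mu : ℝ) (hl0 : (lam:ℂ) ≠ 0) (hmu : (mu:ℂ) = (lam:ℂ)⁻¹) :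
    Amat lam mu *ᵥ kv1 = 0 ∧ Amat lam mu *ᵥ kv2 = 0 ∧ Amat lam mu *ᵥ kv3 lam mu = 0 ∧
    Amat lam mu *ᵥ kv4 lam mu = 0 ∧ Amat lam mu *ᵥ kv5 lam mu = 0 ∧
    ptrans (Amat lam mu) *ᵥ kv1 = 0 ∧ ptrans (Amat lam mu) *ᵥ kv2 = 0 ∧
    ptrans (Amat lam mu) *ᵥ ku3 lam mu = 0 ∧ ptrans (Amat lam mu) *ᵥ ku4 lam mu = 0 ∧
    ptrans (Amat lam mu) *ᵥ ku5 lam mu = 0 := by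
  refine ⟨?_, ?_, ?_, ?_, ?_, ?_, ?_, ?_, ?_, ?_⟩ <;>
  · funext p
    obtain ⟨k, i⟩ := p
    fin_cases k <;> fin_cases i <;>
      simp [Amat, ptrans, vv, vecz, yMat, kv1, kv2, kv3, kv4, kv5, ku3, ku4, ku5,
        mulVec, dotProduct, Fintype.sum_prod_type, Fin.sum_univ_three,
        Matrix.one_apply, Matrix.vecHead, Matrix.vecTail, -mul_eq_zero] <;>
      first
        | ring1
        | (simp only [hmu]; field_simp; try ring1)

/-- `A` generates an extreme ray of the cone `𝕋` of PSD matrices with PSD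
partial transpose: any `B ∈ 𝕋` with `A - B ∈ 𝕋` is a nonnegative multiple of `A`. -/
theorem stmt_12 (lam mu : ℝ) (hl : 0 < lam) (hm : 0 < mu) (hlm : lam * mu = 1)
    (hne : lam ≠ 1) :
    ∀ B : Matrix (Fin 3 × Fin 3) (Fin 3 × Fin 3) ℂ,
      B.PosSemidef → (ptrans B).PosSemidef →
      (Amat lam mu - B).PosSemidef → (ptrans (Amat lam mu - B)).PosSemidef →
      ∃ t : ℝ, 0 ≤ t ∧ B = (t : ℂ) • Amat lam mu := by
  intro B hB hBt hAB hABt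
  have hl0 : (lam:ℂ) ≠ 0 := Complex.ofReal_ne_zero.mpr hl.ne'
  have hm0 : (mu:ℂ) ≠ 0 := Complex.ofReal_ne_zero.mpr hm.ne'
  have hlm' : (lam:ℂ) * (mu:ℂ) = 1 := by exact_mod_cast congrArg (fun x : ℝ => (x:ℂ)) hlm
  have hmu : (mu:ℂ) = (lam:ℂ)⁻¹ := by
    rw [inv_eq_one_div, eq_div_iff hl0]; linear_combination hlm'
  -- the two key non-vanishing facts
  have hlam12 : lam ^ 12 ≠ 1 := by
    rcases lt_trichotomy lam 1 with h | h | h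
    · exact ne_of_lt (pow_lt_one₀ hl.le h (by norm_num))
    · exact absurd h hne
    · exact ne_of_gt (one_lt_pow₀ h (by norm_num))
  have h66 : (lam:ℂ)^6 - (mu:ℂ)^6 ≠ 0 := by
    have hr : lam^6 ≠ mu^6 := by
      intro h
      apply hlam12
      have h1 : lam^6 * mu^6 = 1 := by rw [← mul_pow, hlm, one_pow]
      linear_combination lam^6 * h + h1
    rw [show (lam:ℂ)^6 - (mu:ℂ)^6 = ((lam^6 - mu^6 : ℝ) : ℂ) by push_cast; ring]
    exact Complex.ofReal_ne_zero.mpr (sub_ne_zero.mpr hr)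
  have h93 : (lam:ℂ)^9 - (mu:ℂ)^3 ≠ 0 := by
    have hr : lam^9 ≠ mu^3 := by
      intro h
      apply hlam12
      have h1 : lam^3 * mu^3 = 1 := by rw [← mul_pow, hlm, one_pow]
      linear_combination lam^3 * h + h1
    rw [show (lam:ℂ)^9 - (mu:ℂ)^3 = ((lam^9 - mu^3 : ℝ) : ℂ) by push_cast; ring]
    exact Complex.ofReal_ne_zero.mpr (sub_ne_zero.mpr hr)
  obtain ⟨hA1, hA2, hA3, hA4, hA5, hPt1, hPt2, hPt3, hPt4, hPt5⟩ := Aker lam mu hl0 hmu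
  -- the sandwich lemma
  have sand : ∀ (M N : Matrix (Fin 3 × Fin 3) (Fin 3 × Fin 3) ℂ) (v : Fin 3 × Fin 3 → ℂ),
      M.PosSemidef → (N - M).PosSemidef → N *ᵥ v = 0 → M *ᵥ v = 0 := by
    intro M N v hM hNM hv
    have h2 : 0 ≤ star v ⬝ᵥ (N - M) *ᵥ v := hNM.dotProduct_mulVec_nonneg v
    rw [sub_mulVec, hv, zero_sub, dotProduct_neg, neg_nonneg] at h2
    exact (hM.dotProduct_mulVec_zero_iff v).mp (le_antisymm h2 (hM.dotProduct_mulVec_nonneg v))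
  have hB1 := sand B _ _ hB hAB hA1
  have hB2 := sand B _ _ hB hAB hA2
  have hB3 := sand B _ _ hB hAB hA3
  have hB4 := sand B _ _ hB hAB hA4
  have hB5 := sand B _ _ hB hAB hA5
  have hptsub : ptrans (Amat lam mu) - ptrans B = ptrans (Amat lam mu - B) := rfl
  have hQ1 := sand (ptrans B) _ _ hBt (by rw [hptsub]; exact hABt) hPt1
  have hQ2 := sand (ptrans B) _ _ hBt (by rw [hptsub]; exact hABt) hPt2
  have hQ3 := sand (ptrans B) _ _ hBt (by rw [hptsub]; exact hABt) hPt3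
  have hQ4 := sand (ptrans B) _ _ hBt (by rw [hptsub]; exact hABt) hPt4
  have hQ5 := sand (ptrans B) _ _ hBt (by rw [hptsub]; exact hABt) hPt5
  -- column (vecMul) versions
  have hBc1 : star kv1 ᵥ* B = 0 := by rw [← hB.1.eq, ← star_mulVec, hB1, star_zero]
  have hBc2 : star kv2 ᵥ* B = 0 := by rw [← hB.1.eq, ← star_mulVec, hB2, star_zero]
  have hBc3 : star (kv3 lam mu) ᵥ* B = 0 := by rw [← hB.1.eq, ← star_mulVec, hB3, star_zero]
  have hBc4 : star (kv4 lam mu) ᵥ* B = 0 := by rw [← hB.1.eq, ← star_mulVec, hB4, star_zero]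
  have hBc5 : star (kv5 lam mu) ᵥ* B = 0 := by rw [← hB.1.eq, ← star_mulVec, hB5, star_zero]
  -- scalar row relations
  have hR1 : ∀ p, B p (0,0) = B p (1,1) := by
    intro p; have h := congrFun hB1 p
    simp [kv1, mulVec, dotProduct, Fintype.sum_prod_type, Fin.sum_univ_three,
      Matrix.vecHead, Matrix.vecTail, -mul_eq_zero] at h
    linear_combination h
  have hR2 : ∀ p, B p (0,0) = B p (2,2) := by
    intro p; have h := congrFun hB2 p
    simp [kv2, mulVec, dotProduct, Fintype.sum_prod_type, Fin.sum_univ_three,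
      Matrix.vecHead, Matrix.vecTail, -mul_eq_zero] at h
    linear_combination h
  have hR3 : ∀ p, (mu:ℂ) * B p (1,0) = (lam:ℂ) * B p (0,1) := by
    intro p; have h := congrFun hB3 p
    simp [kv3, mulVec, dotProduct, Fintype.sum_prod_type, Fin.sum_univ_three,
      Matrix.vecHead, Matrix.vecTail, -mul_eq_zero] at h
    linear_combination h
  have hR4 : ∀ p, (mu:ℂ) * B p (2,1) = (lam:ℂ) * B p (1,2) := by
    intro p; have h := congrFun hB4 p
    simp [kv4, mulVec, dotProduct, Fintype.sum_prod_type, Fin.sum_univ_three,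
      Matrix.vecHead, Matrix.vecTail, -mul_eq_zero] at h
    linear_combination h
  have hR5 : ∀ p, (lam:ℂ) * B p (2,0) = (mu:ℂ) * B p (0,2) := by
    intro p; have h := congrFun hB5 p
    simp [kv5, mulVec, dotProduct, Fintype.sum_prod_type, Fin.sum_univ_three,
      Matrix.vecHead, Matrix.vecTail, -mul_eq_zero] at h
    linear_combination h
  -- scalar column relations
  have hC1 : ∀ q, B (0,0) q = B (1,1) q := by
    intro q; have h := congrFun hBc1 q
    simp [kv1, vecMul, dotProduct, Fintype.sum_prod_type, Fin.sum_univ_three,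
      Matrix.vecHead, Matrix.vecTail, -mul_eq_zero] at h
    linear_combination h
  have hC2 : ∀ q, B (0,0) q = B (2,2) q := by
    intro q; have h := congrFun hBc2 q
    simp [kv2, vecMul, dotProduct, Fintype.sum_prod_type, Fin.sum_univ_three,
      Matrix.vecHead, Matrix.vecTail, -mul_eq_zero] at h
    linear_combination h
  have hC3 : ∀ q, (mu:ℂ) * B (1,0) q = (lam:ℂ) * B (0,1) q := by
    intro q; have h := congrFun hBc3 q
    simp [kv3, vecMul, dotProduct, Fintype.sum_prod_type, Fin.sum_univ_three,
      Matrix.vecHead, Matrix.vecTail, -mul_eq_zero] at h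
    linear_combination h
  have hC4 : ∀ q, (mu:ℂ) * B (2,1) q = (lam:ℂ) * B (1,2) q := by
    intro q; have h := congrFun hBc4 q
    simp [kv4, vecMul, dotProduct, Fintype.sum_prod_type, Fin.sum_univ_three,
      Matrix.vecHead, Matrix.vecTail, -mul_eq_zero] at h
    linear_combination h
  have hC5 : ∀ q, (lam:ℂ) * B (2,0) q = (mu:ℂ) * B (0,2) q := by
    intro q; have h := congrFun hBc5 q
    simp [kv5, vecMul, dotProduct, Fintype.sum_prod_type, Fin.sum_univ_three,
      Matrix.vecHead, Matrix.vecTail, -mul_eq_zero] at h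
    linear_combination h
  -- scalar relations coming from the partial transpose
  have hP1 : ∀ a b : Fin 3, B (a,0) (0,b) = B (a,1) (1,b) := by
    intro a b; have h := congrFun hQ1 (a,b)
    simp [kv1, ptrans, mulVec, dotProduct, Fintype.sum_prod_type, Fin.sum_univ_three,
      Matrix.vecHead, Matrix.vecTail, -mul_eq_zero] at h
    linear_combination h
  have hP2 : ∀ a b : Fin 3, B (a,0) (0,b) = B (a,2) (2,b) := by
    intro a b; have h := congrFun hQ2 (a,b)
    simp [kv2, ptrans, mulVec, dotProduct, Fintype.sum_prod_type, Fin.sum_univ_three,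
      Matrix.vecHead, Matrix.vecTail, -mul_eq_zero] at h
    linear_combination h
  have hP3 : ∀ a b : Fin 3, (lam:ℂ) * B (a,1) (0,b) = (mu:ℂ) * B (a,0) (1,b) := by
    intro a b; have h := congrFun hQ3 (a,b)
    simp [ku3, ptrans, mulVec, dotProduct, Fintype.sum_prod_type, Fin.sum_univ_three,
      Matrix.vecHead, Matrix.vecTail, -mul_eq_zero] at h
    linear_combination h
  have hP4 : ∀ a b : Fin 3, (lam:ℂ) * B (a,2) (1,b) = (mu:ℂ) * B (a,1) (2,b) := by
    intro a b; have h := congrFun hQ4 (a,b)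
    simp [ku4, ptrans, mulVec, dotProduct, Fintype.sum_prod_type, Fin.sum_univ_three,
      Matrix.vecHead, Matrix.vecTail, -mul_eq_zero] at h
    linear_combination h
  have hP5 : ∀ a b : Fin 3, (mu:ℂ) * B (a,2) (0,b) = (lam:ℂ) * B (a,0) (2,b) := by
    intro a b; have h := congrFun hQ5 (a,b)
    simp [ku5, ptrans, mulVec, dotProduct, Fintype.sum_prod_type, Fin.sum_univ_three,
      Matrix.vecHead, Matrix.vecTail, -mul_eq_zero] at h
    linear_combination h
  -- normalized rewrite rules towards representative entries
  have hq0a : ∀ p, B p (1,1) = B p (0,0) := fun p => (hR1 p).symm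
  have hq0b : ∀ p, B p (2,2) = B p (0,0) := fun p => (hR2 p).symm
  have hq1 : ∀ p, B p (0,1) = (mu:ℂ)^2 * B p (1,0) := by
    intro p; linear_combination (-(mu:ℂ)) * hR3 p - B p (0,1) * hlm'
  have hq2 : ∀ p, B p (1,2) = (mu:ℂ)^2 * B p (2,1) := by
    intro p; linear_combination (-(mu:ℂ)) * hR4 p - B p (1,2) * hlm'
  have hq3 : ∀ p, B p (0,2) = (lam:ℂ)^2 * B p (2,0) := by
    intro p; linear_combination (-(lam:ℂ)) * hR5 p - B p (0,2) * hlm'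
  have hp0a : ∀ q, B (1,1) q = B (0,0) q := fun q => (hC1 q).symm
  have hp0b : ∀ q, B (2,2) q = B (0,0) q := fun q => (hC2 q).symm
  have hp1 : ∀ q, B (0,1) q = (mu:ℂ)^2 * B (1,0) q := by
    intro q; linear_combination (-(mu:ℂ)) * hC3 q - B (0,1) q * hlm'
  have hp2 : ∀ q, B (1,2) q = (mu:ℂ)^2 * B (2,1) q := by
    intro q; linear_combination (-(mu:ℂ)) * hC4 q - B (1,2) q * hlm'
  have hp3 : ∀ q, B (0,2) q = (lam:ℂ)^2 * B (2,0) q := by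
    intro q; linear_combination (-(lam:ℂ)) * hC5 q - B (0,2) q * hlm'
  -- diagonal representative values
  have hmid1 : B (1,0) (0,1) = B (0,0) (0,0) := by
    rw [hP1 1 1, hp0a, hq0a]
  have R11 : B (1,0) (1,0) = (lam:ℂ)^2 * B (0,0) (0,0) := by
    linear_combination (lam:ℂ) * hR3 (1,0) + (lam:ℂ)^2 * hmid1 - B (1,0) (1,0) * hlm'
  have hmid2 : B (1,2) (2,1) = B (0,0) (0,0) := by
    rw [← hP2 1 1, hmid1]
  have R22 : B (2,1) (2,1) = (lam:ℂ)^2 * B (0,0) (0,0) := by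
    linear_combination (lam:ℂ) * hC4 (2,1) + (lam:ℂ)^2 * hmid2 - B (2,1) (2,1) * hlm'
  have hmid3 : B (2,0) (0,2) = B (0,0) (0,0) := by
    rw [hP2 2 2, hp0b, hq0b]
  have R33 : B (2,0) (2,0) = (mu:ℂ)^2 * B (0,0) (0,0) := by
    linear_combination (mu:ℂ) * hR5 (2,0) + (mu:ℂ)^2 * hmid3 - B (2,0) (2,0) * hlm'
  -- block 1 : entries connecting class 0 ↔ class 1 and class 2 ↔ class 3 vanish
  have hx : B (1,0) (0,0) = (mu:ℂ)^2 * B (2,1) (2,0) := by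
    rw [hP2 1 0, hp2]
  have hy : B (0,0) (0,1) = (lam:ℂ)^2 * B (2,0) (2,1) := by
    rw [hP2 0 1, hp3]
  have hi : (mu:ℂ) * B (1,0) (0,0) = (lam:ℂ) * B (0,0) (0,1) := by
    linear_combination hC3 (0,0) + hP3 0 0 + hR3 (0,0)
  have hii : (lam:ℂ)^3 * B (2,1) (2,0) = (mu:ℂ)^3 * B (2,0) (2,1) := by
    have h := hP3 2 2
    rw [hq3, hq2] at h
    linear_combination h
  have hiii : (mu:ℂ)^3 * B (2,1) (2,0) = (lam:ℂ)^3 * B (2,0) (2,1) := by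
    linear_combination hi - (mu:ℂ) * hx + (lam:ℂ) * hy
  have Z32 : B (2,0) (2,1) = 0 := by
    have h6 : ((lam:ℂ)^6 - (mu:ℂ)^6) * B (2,0) (2,1) = 0 := by
      linear_combination (mu:ℂ)^3 * hii - (lam:ℂ)^3 * hiii
    exact (mul_eq_zero.mp h6).resolve_left h66
  have Z23 : B (2,1) (2,0) = 0 := by
    have h := hii
    rw [Z32, mul_zero] at h
    exact (mul_eq_zero.mp h).resolve_left (pow_ne_zero _ hl0)
  have Z10 : B (1,0) (0,0) = 0 := by rw [hx, Z23, mul_zero]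
  have hy0 : B (0,0) (0,1) = 0 := by rw [hy, Z32, mul_zero]
  have Z01 : B (0,0) (1,0) = 0 := by
    have h := hR3 (0,0)
    rw [hy0, mul_zero] at h
    exact (mul_eq_zero.mp h).resolve_left hm0
  -- block 2 : entries connecting class 0 ↔ class 2 and class 1 ↔ class 3 vanish
  have hx2 : B (2,1) (1,1) = (mu:ℂ)^2 * B (2,0) (1,0) := by
    rw [← hP1 2 1, hq1]
  have hy2 : B (1,1) (1,2) = (lam:ℂ)^2 * B (1,0) (2,0) := by
    rw [← hP1 1 2, hq3]
  have hi2 : (mu:ℂ) * B (2,1) (1,1) = (lam:ℂ) * B (1,1) (1,2) := by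
    linear_combination hC4 (1,1) + hP4 1 1 + hR4 (1,1)
  have hii2 : (lam:ℂ)^3 * B (2,0) (1,0) = (mu:ℂ)^3 * B (1,0) (2,0) := by
    have h := hP4 0 0
    rw [hp3, hp1] at h
    linear_combination h
  have hiii2 : (mu:ℂ)^3 * B (2,0) (1,0) = (lam:ℂ)^3 * B (1,0) (2,0) := by
    linear_combination hi2 - (mu:ℂ) * hx2 + (lam:ℂ) * hy2
  have Z13 : B (1,0) (2,0) = 0 := by
    have h6 : ((lam:ℂ)^6 - (mu:ℂ)^6) * B (1,0) (2,0) = 0 := by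
      linear_combination (mu:ℂ)^3 * hii2 - (lam:ℂ)^3 * hiii2
    exact (mul_eq_zero.mp h6).resolve_left h66
  have Z31 : B (2,0) (1,0) = 0 := by
    have h := hii2
    rw [Z13, mul_zero] at h
    exact (mul_eq_zero.mp h).resolve_left (pow_ne_zero _ hl0)
  have hx20 : B (2,1) (1,1) = 0 := by rw [hx2, Z31, mul_zero]
  have hy20 : B (1,1) (1,2) = 0 := by rw [hy2, Z13, mul_zero]
  have Z20 : B (2,1) (0,0) = 0 := by rw [hR1 (2,1)]; exact hx20
  have Z02 : B (0,0) (2,1) = 0 := by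
    have h := hR4 (1,1)
    rw [hy20, mul_zero] at h
    rw [hC1 (2,1)]
    exact (mul_eq_zero.mp h).resolve_left hm0
  -- block 3 : entries connecting class 0 ↔ class 3 and class 1 ↔ class 2 vanish
  have hx31 : B (2,1) (1,0) = B (2,0) (0,0) := (hP1 2 0).symm
  have hy31 : B (0,1) (1,2) = B (0,0) (0,2) := (hP1 0 2).symm
  have hi3 : (lam:ℂ) * B (2,0) (0,0) = (mu:ℂ) * B (0,0) (0,2) := by
    linear_combination hC5 (0,0) + hP5 0 0 + hR5 (0,0)
  have e1 : (lam:ℂ)^3 * B (1,0) (2,1) = (mu:ℂ)^3 * B (2,0) (0,0) := by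
    have h := hP5 1 1
    rw [hp2, hq1, hx31] at h
    linear_combination -(lam:ℂ)^2 * h + (mu:ℂ)^3 * B (2,0) (0,0) * ((lam:ℂ)*(mu:ℂ)+1) * hlm'
  have e2 : (lam:ℂ)^2 * B (0,0) (0,2) = (mu:ℂ)^2 * B (1,0) (2,1) := by
    linear_combination -(lam:ℂ) * hC3 (1,2) - (lam:ℂ)^2 * hy31 - (mu:ℂ) * hR4 (1,0)
  have f1 : (lam:ℂ)^4 * B (2,0) (0,0) = (mu:ℂ)^2 * B (1,0) (2,1) := by
    linear_combination (lam:ℂ)^3 * hi3 + e2 + (lam:ℂ)^2 * B (0,0) (0,2) * hlm'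
  have f2 : (lam:ℂ)^3 * B (2,0) (0,0) = (mu:ℂ)^3 * B (1,0) (2,1) := by
    linear_combination (mu:ℂ) * f1 - (lam:ℂ)^3 * B (2,0) (0,0) * hlm'
  have f3 : B (1,0) (2,1) = (lam:ℂ)^6 * B (2,0) (0,0) := by
    linear_combination -(lam:ℂ)^3 * f2
      - B (1,0) (2,1) * ((lam:ℂ)^2*(mu:ℂ)^2 + (lam:ℂ)*(mu:ℂ) + 1) * hlm'
  have Z30 : B (2,0) (0,0) = 0 := by
    have h9 : ((lam:ℂ)^9 - (mu:ℂ)^3) * B (2,0) (0,0) = 0 := by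
      linear_combination e1 - (lam:ℂ)^3 * f3
    exact (mul_eq_zero.mp h9).resolve_left h93
  have Z12 : B (1,0) (2,1) = 0 := by rw [f3, Z30, mul_zero]
  have Z21 : B (2,1) (1,0) = 0 := hx31.trans Z30
  have hy30 : B (0,0) (0,2) = 0 := by
    have h := hi3
    rw [Z30, mul_zero] at h
    exact (mul_eq_zero.mp h.symm).resolve_left hm0
  have Z03 : B (0,0) (2,0) = 0 := by
    have h := hR5 (0,0)
    rw [hy30, mul_zero] at h
    exact (mul_eq_zero.mp h).resolve_left hl0
  -- the key entrywise identity
  have key : ∀ (k i l j : Fin 3), B (k,i) (l,j) = B (0,0) (0,0) * Amat lam mu (k,i) (l,j) := by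
    intro k i l j
    fin_cases k <;> fin_cases i <;> fin_cases l <;> fin_cases j <;>
    · simp only [Fin.mk_zero, Fin.mk_one, Fin.reduceFinMk,
        hq0a, hq0b, hq1, hq2, hq3, hp0a, hp0b, hp1, hp2, hp3,
        R11, R22, R33, Z10, Z01, Z23, Z32, Z13, Z31, Z20, Z02, Z30, Z03, Z12, Z21]
      simp [Amat, vv, vecz, yMat, Fin.sum_univ_three, Matrix.one_apply, Matrix.vecHead,
        Matrix.vecTail, Function.comp, -mul_eq_zero]
      try simp only [hmu]
      try field_simp
      try (first | ring1 | (left; ring1))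
  -- positivity of the diagonal entry
  have hdiag : 0 ≤ B (0,0) (0,0) := by
    have h := hB.dotProduct_mulVec_nonneg (Pi.single ((0:Fin 3),(0:Fin 3)) 1)
    simpa [mulVec, dotProduct, Fintype.sum_prod_type, Fin.sum_univ_three,
      Pi.single_apply, Prod.ext_iff] using h
  rw [Complex.le_def] at hdiag
  refine ⟨(B (0,0) (0,0)).re, by simpa using hdiag.1, ?_⟩
  have htc : B (0,0) (0,0) = ((B (0,0) (0,0)).re : ℂ) := by
    apply Complex.ext
    · simp
    · simpa using hdiag.2.symm
  ext ⟨k, i⟩ ⟨l, j⟩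
  rw [Matrix.smul_apply, smul_eq_mul, ← htc]
  exact key k i l j
end
end

section
/- Let λ, μ > 0 with λμ = 1 and λ ≠ 1. The four-dimensional subspace of M₃ spanned by {I₃, λe₁₂+μe₂₁, λe₂₃+μe₃₂, μe₁₃+λe₃₁} contains no nonzero matrix of rank one. -/
open Matrix BigOperators
open scoped ComplexOrder

noncomputable section

/-- all 2×2 minors of a rank-one 3×3 matrix vanish. -/
lemma minor_eq_zero (z : Matrix (Fin 3) (Fin 3) ℂ) (hz : z.rank = 1)
    (i0 i1 j0 j1 : Fin 3) :
    z i0 j0 * z i1 j1 - z i0 j1 * z i1 j0 = 0 := by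
  by_contra h
  have hli : LinearIndependent ℂ ![z i0, z i1] := by
    rw [linearIndependent_fin2]
    refine ⟨?_, ?_⟩
    · show z i1 ≠ 0
      intro h0
      apply h
      rw [h0]
      simp
    · show ∀ a : ℂ, a • z i1 ≠ z i0
      intro a ha
      apply h
      have h0 : z i0 j0 = a * z i1 j0 := by rw [← ha]; rfl
      have h1 : z i0 j1 = a * z i1 j1 := by rw [← ha]; rfl
      rw [h0, h1]; ring
  have hcard : (2 : ℕ) = Set.finrank ℂ (Set.range ![z i0, z i1]) := by
    simpa using linearIndependent_iff_card_eq_finrank_span.mp hli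
  have hsub : Set.range ![z i0, z i1] ⊆ Set.range z := by
    rw [Set.range_subset_iff]
    intro p
    fin_cases p
    · exact ⟨i0, rfl⟩
    · exact ⟨i1, rfl⟩
  have hmono : Set.finrank ℂ (Set.range ![z i0, z i1]) ≤ Set.finrank ℂ (Set.range z) :=
    Submodule.finrank_mono (Submodule.span_mono hsub)
  have hrank : z.rank = Set.finrank ℂ (Set.range z) := z.rank_eq_finrank_span_row
  omega

/-- the span of `{I₃, λe₁₂+μe₂₁, λe₂₃+μe₃₂, μe₁₃+λe₃₁}` contains no
nonzero rank-one matrix. -/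
theorem stmt_13 (lam mu : ℝ) (hl : 0 < lam) (hm : 0 < mu) (hlm : lam * mu = 1)
    (hne : lam ≠ 1) :
    ∀ z ∈ Submodule.span ℂ
        ({(1 : Matrix (Fin 3) (Fin 3) ℂ), yMat lam mu 0, yMat lam mu 1, yMat lam mu 2} :
          Set (Matrix (Fin 3) (Fin 3) ℂ)),
      Matrix.rank z = 1 → False := by
  intro z hzmem hz
  rw [Submodule.mem_span_insert] at hzmem
  obtain ⟨a, z1, hz1, rfl⟩ := hzmem
  rw [Submodule.mem_span_insert] at hz1
  obtain ⟨b, z2, hz2, rfl⟩ := hz1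
  rw [Submodule.mem_span_insert] at hz2
  obtain ⟨c, z3, hz3, rfl⟩ := hz2
  rw [Submodule.mem_span_singleton] at hz3
  obtain ⟨d, rfl⟩ := hz3
  set z : Matrix (Fin 3) (Fin 3) ℂ :=
    a • (1 : Matrix (Fin 3) (Fin 3) ℂ) +
      (b • yMat lam mu 0 + (c • yMat lam mu 1 + d • yMat lam mu 2)) with hzdef
  have hlmC : (lam : ℂ) * (mu : ℂ) = 1 := by
    exact_mod_cast congrArg (Complex.ofReal) hlm
  have e00 : z 0 0 = a := by simp [hzdef, yMat, Matrix.one_apply]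
  have e11 : z 1 1 = a := by simp [hzdef, yMat, Matrix.one_apply]
  have e22 : z 2 2 = a := by simp [hzdef, yMat, Matrix.one_apply]
  have e01 : z 0 1 = b * lam := by
    simp [hzdef, yMat, Matrix.one_apply]
  have e10 : z 1 0 = b * mu := by
    simp [hzdef, yMat, Matrix.one_apply]
  have e12 : z 1 2 = c * lam := by
    simp [hzdef, yMat, Matrix.one_apply]
  have e21 : z 2 1 = c * mu := by
    simp [hzdef, yMat, Matrix.one_apply]
  have e02 : z 0 2 = d * mu := by
    simp [hzdef, yMat, Matrix.one_apply]
  have e20 : z 2 0 = d * lam := by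
    simp [hzdef, yMat, Matrix.one_apply]
  have m1 := minor_eq_zero z hz 0 1 0 1
  have m2 := minor_eq_zero z hz 0 2 0 2
  have m3 := minor_eq_zero z hz 1 2 1 2
  have m4 := minor_eq_zero z hz 0 1 1 2
  have m5 := minor_eq_zero z hz 1 2 0 1
  rw [e00, e11, e01, e10] at m1
  rw [e00, e22, e02, e20] at m2
  rw [e11, e22, e12, e21] at m3
  rw [e01, e12, e02, e11] at m4
  rw [e10, e21, e11, e20] at m5
  -- m1 : a*a - (b*lam)*(b*mu) = 0, etc.
  have hb2 : b * b = a * a := by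
    have : b * b * ((lam : ℂ) * mu) = a * a := by linear_combination -m1
    rw [hlmC, mul_one] at this; exact this
  have hd2 : d * d = a * a := by
    have : d * d * ((lam : ℂ) * mu) = a * a := by linear_combination -m2
    rw [hlmC, mul_one] at this; exact this
  have hc2 : c * c = a * a := by
    have : c * c * ((lam : ℂ) * mu) = a * a := by linear_combination -m3
    rw [hlmC, mul_one] at this; exact this
  have ha : a ≠ 0 := by
    intro ha0
    have hb0 : b = 0 := by
      have := hb2; rw [ha0] at this; simpa [mul_self_eq_zero] using this
    have hc0 : c = 0 := by
      have := hc2; rw [ha0] at this; simpa [mul_self_eq_zero] using this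
    have hd0 : d = 0 := by
      have := hd2; rw [ha0] at this; simpa [mul_self_eq_zero] using this
    have hz0 : z = 0 := by
      rw [hzdef, ha0, hb0, hc0, hd0]; simp
    rw [hz0, Matrix.rank_zero] at hz
    exact one_ne_zero hz.symm
  have hb : b ≠ 0 := fun h0 => ha (by
    have := hb2; rw [h0, mul_zero] at this
    exact mul_self_eq_zero.mp this.symm)
  have hc : c ≠ 0 := fun h0 => ha (by
    have := hc2; rw [h0, mul_zero] at this
    exact mul_self_eq_zero.mp this.symm)
  have hd : d ≠ 0 := fun h0 => ha (by
    have := hd2; rw [h0, mul_zero] at this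
    exact mul_self_eq_zero.mp this.symm)
  -- m4 : b*lam*(c*lam) - d*mu*a = 0, m5 : b*mu*(c*mu) - a*(d*lam) = 0
  have key : b * c * ((lam : ℂ) ^ 3 - (mu : ℂ) ^ 3) = 0 := by
    linear_combination (lam : ℂ) * m4 - (mu : ℂ) * m5
  have hcube : (lam : ℂ) ^ 3 = (mu : ℂ) ^ 3 := by
    rcases mul_eq_zero.mp key with h0 | h0
    · exact absurd h0 (mul_ne_zero hb hc)
    · exact sub_eq_zero.mp h0
  have hcubeR : lam ^ 3 = mu ^ 3 := by
    exact_mod_cast hcube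
  have hlmeq : lam = mu := by nlinarith [sq_nonneg (lam - mu), sq_nonneg (lam + mu)]
  have : lam = 1 := by nlinarith
  exact hne this
end
end

section
/- Let λ > 0, λ ≠ 1, μ = 1/λ, ζ = √(λ²/(2+2λ⁶)). Define x₁ = (1/2,1/2,1/2,1/2), x₂ = (λ³ζ, ζ, λ³ζ, ζ), x₃ = (1/(2λ), 1/(2λ), −1/(2λ), −1/(2λ)), x₄ = (ζ, λ³ζ, −ζ, −λ³ζ), and y₁ = x₁, y₂ = −x₂, y₃ = x₃, y₄ = −x₄. For i = 1,...,4 define z_i and z_{i+4} as the 3×3 matrices with rows (x_{1i}, x_{2i}, x_{3i}), (x_{2i}/λ², x_{1i}, x_{4i}), (λ²x_{3i}, x_{4i}/λ², x_{1i}) and similarly with y in place of x. Then A = (1/2) Σ_{i=1}^8 z_i z_i*, where A = x̃x̃* + Σỹᵢỹᵢ* is the PPT entangled state built from x = I₃, y₁ = λe₁₂+μe₂₁, y₂ = λe₂₃+μe₃₂, y₃ = μe₁₃+λe₃₁. [Note: here z_i z_i* abbreviates z̃_i z̃_i* in M₃⊗M₃.] -/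
open Matrix BigOperators
open scoped ComplexOrder

noncomputable section

/-- `ζ = √(λ²/(2+2λ⁶))`. -/
def zet (lam : ℝ) : ℝ := Real.sqrt (lam ^ 2 / (2 + 2 * lam ^ 6))

/-- the vectors `x₁, x₂, x₃, x₄ ∈ ℂ⁴` (rows indexed first). -/
def xv (lam : ℝ) : Fin 4 → Fin 4 → ℝ :=
  ![![1 / 2, 1 / 2, 1 / 2, 1 / 2],
    ![lam ^ 3 * zet lam, zet lam, lam ^ 3 * zet lam, zet lam],
    ![1 / (2 * lam), 1 / (2 * lam), -(1 / (2 * lam)), -(1 / (2 * lam))],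
    ![zet lam, lam ^ 3 * zet lam, -zet lam, -(lam ^ 3 * zet lam)]]

/-- `y₁ = x₁`, `y₂ = -x₂`, `y₃ = x₃`, `y₄ = -x₄`. -/
def yv (lam : ℝ) : Fin 4 → Fin 4 → ℝ :=
  ![xv lam 0, fun i => -xv lam 1 i, xv lam 2, fun i => -xv lam 3 i]

/-- the matrix `zᵢ` built from a family `v = (v₁,v₂,v₃,v₄)` of vectors:
rows `(v_{1i}, v_{2i}, v_{3i})`, `(v_{2i}/λ², v_{1i}, v_{4i})`, `(λ²v_{3i}, v_{4i}/λ², v_{1i})`. -/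
def zMat (lam : ℝ) (v : Fin 4 → Fin 4 → ℝ) (i : Fin 4) : Matrix (Fin 3) (Fin 3) ℂ :=
  !![((v 0 i : ℝ) : ℂ), ((v 1 i : ℝ) : ℂ), ((v 2 i : ℝ) : ℂ);
     ((v 1 i / lam ^ 2 : ℝ) : ℂ), ((v 0 i : ℝ) : ℂ), ((v 3 i : ℝ) : ℂ);
     ((lam ^ 2 * v 2 i : ℝ) : ℂ), ((v 3 i / lam ^ 2 : ℝ) : ℂ), ((v 0 i : ℝ) : ℂ)]
lemma aux0 {α : Type*} {n : ℕ} (a : α) :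
    Matrix.vecHead (Matrix.vecTail (fun _ : Fin (n+2) => a)) = a := rfl

set_option maxHeartbeats 16000000

/-- `A = (1/2) Σ_{i=1}^8 z̃ᵢ z̃ᵢ*`, where `z₁,…,z₄` come from the `xᵢ`
and `z₅,…,z₈` from the `yᵢ`. -/
theorem stmt_16 (lam mu : ℝ) (hl : 0 < lam) (hne : lam ≠ 1) (hm : mu = lam⁻¹) :
    Amat lam mu = (1 / 2 : ℂ) •
      ((∑ i : Fin 4, vv (zMat lam (xv lam) i)) +
        ∑ i : Fin 4, vv (zMat lam (yv lam) i)) := by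
  have hl0 : lam ≠ 0 := ne_of_gt hl
  have hz : zet lam ^ 2 = lam ^ 2 / (2 + 2 * lam ^ 6) := by
    rw [zet, Real.sq_sqrt (by positivity)]
  have hzC : ((zet lam : ℂ)) ^ 2 = (lam : ℂ) ^ 2 / (2 + 2 * (lam : ℂ) ^ 6) := by
    exact_mod_cast hz
  have hlC : (lam : ℂ) ≠ 0 := by exact_mod_cast hl0
  ext ⟨k, i⟩ ⟨l, j⟩
  fin_cases k <;> fin_cases i <;> fin_cases l <;> fin_cases j <;>
  · simp only [Amat, vv, vecz, yMat, zMat, xv, yv, hm, Matrix.add_apply,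
      Matrix.smul_apply, Matrix.sum_apply, Fin.sum_univ_three, Fin.sum_univ_four,
      Matrix.cons_val', Matrix.cons_val_zero, Matrix.cons_val_one, Matrix.head_cons,
      Matrix.cons_val_fin_one, Matrix.empty_val', Matrix.cons_val_two, Matrix.tail_cons,
      Matrix.head_fin_const,
      Matrix.one_apply, Pi.neg_apply, Fin.isValue, reduceIte,
      Complex.star_def, Complex.conj_ofReal, map_ofNat, smul_eq_mul]
    norm_num [Fin.ext_iff, aux0]
    try norm_cast
    try field_simp
    try ring_nf
    try rw [hzC]
    try field_simp
    try ring
    try simp [aux0, map_ofNat]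
    try norm_num
    try ring
    try rw [hzC]
    try field_simp
    try ring
end
end

section
/- With λ > 0, λ ≠ 1, ζ = √(λ²/(2+2λ⁶)), and z_i (i = 1,…,8) the 3×3 matrices defined from x₁,…,x₄, y₁,…,y₄ as in the explicit construction, every z_i has determinant zero, hence rank at most 2. -/
open Matrix BigOperators
open scoped ComplexOrder

noncomputable section

lemma rank_le_two_of_det_eq_zero' (A : Matrix (Fin 3) (Fin 3) ℂ) (h : A.det = 0) :
    A.rank ≤ 2 := by
  obtain ⟨v, hv, hAv⟩ := (Matrix.exists_mulVec_eq_zero_iff).2 h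
  have hker : v ∈ LinearMap.ker A.mulVecLin := by simpa [Matrix.mulVecLin] using hAv
  have h1 : 1 ≤ Module.finrank ℂ (LinearMap.ker A.mulVecLin) := by
    rw [Nat.one_le_iff_ne_zero]
    intro h0
    have : LinearMap.ker A.mulVecLin = ⊥ := Submodule.finrank_eq_zero.mp h0
    exact hv (by simpa [this] using hker)
  have hrn := LinearMap.finrank_range_add_finrank_ker A.mulVecLin
  have hrk : A.rank = Module.finrank ℂ (LinearMap.range A.mulVecLin) := rfl
  simp [Module.finrank_fintype_fun_eq_card] at hrn
  omega

lemma detz' (lam : ℝ) (v : Fin 4 → Fin 4 → ℝ) (i : Fin 4) (hl : lam ≠ 0)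
    (h : v 0 i ^ 3 * lam ^ 4 - v 0 i * v 3 i ^ 2 * lam ^ 2 - v 0 i * v 1 i ^ 2 * lam ^ 2
        + v 1 i * v 2 i * v 3 i * lam ^ 6 + v 1 i * v 2 i * v 3 i
        - v 0 i * v 2 i ^ 2 * lam ^ 6 = 0) :
    (zMat lam v i).det = 0 := by
  have hl0 : (lam : ℂ) ≠ 0 := by exact_mod_cast hl
  have h' := congrArg (fun t : ℝ => (t : ℂ)) h
  push_cast at h'
  rw [zMat, Matrix.det_fin_three]
  simp only [Matrix.cons_val_zero, Matrix.cons_val_one, Matrix.head_cons,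
    Matrix.cons_val_two, Matrix.tail_cons, Matrix.of_apply, Matrix.cons_val',
    Matrix.empty_val', Matrix.cons_val_fin_one, Matrix.head_fin_const]
  push_cast
  field_simp
  linear_combination h'

set_option maxHeartbeats 1000000 in
/-- every `zᵢ`, `i = 1,…,8`, has determinant zero, hence rank at most `2`. -/
theorem stmt_17 (lam : ℝ) (hl : 0 < lam) (hne : lam ≠ 1) :
    ∀ i : Fin 4,
      (zMat lam (xv lam) i).det = 0 ∧ (zMat lam (yv lam) i).det = 0 ∧
      (zMat lam (xv lam) i).rank ≤ 2 ∧ (zMat lam (yv lam) i).rank ≤ 2 := by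
  intro i
  have hx : (zMat lam (xv lam) i).det = 0 := by
    apply detz' lam _ i hl.ne'
    fin_cases i <;> · simp [xv]; field_simp; ring
  have hy : (zMat lam (yv lam) i).det = 0 := by
    apply detz' lam _ i hl.ne'
    fin_cases i <;> · simp [yv, xv]; field_simp; ring
  exact ⟨hx, hy, rank_le_two_of_det_eq_zero' _ hx, rank_le_two_of_det_eq_zero' _ hy⟩
end
end
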